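/- Let P ⊆ ℝ^2 be the non-convex lattice quadrilateral with vertices v_0=(1,0), v_1=(−3,−1), v_2=(2,0), v_3=(−3,1) (explicitly, P = conv{v_0,v_1,v_2} ∪ conv{v_0,v_2,v_3}), and let w(x) = x_1^2. Then the polynomial h*_{P,w}(t) defined by Σ_{n≥0} ( Σ_{x ∈ nP∩ℤ^2} x_1^2 ) t^n = h*_{P,w}(t)/(1−t)^5 equals 23t − 4t^2 + 9t^3; in particular, it has a negative coefficient, so the nonnegativity of weighted h*-polynomials of convex lattice polygons with respect to squares of linear forms fails for non-convex polygons. -/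

import Mathlib

open scoped Pointwise

noncomputable section

/-- The non-convex lattice quadrilateral with vertices `v₀=(1,0)`, `v₁=(−3,−1)`, `v₂=(2,0)`,
`v₃=(−3,1)`, explicitly `P = conv{v₀,v₁,v₂} ∪ conv{v₀,v₂,v₃}`. -/
def nonConvexQuad : Set (Fin 2 → ℝ) :=
  convexHull ℝ ({![1, 0], ![-3, -1], ![2, 0]} : Set (Fin 2 → ℝ)) ∪
    convexHull ℝ ({![1, 0], ![2, 0], ![-3, 1]} : Set (Fin 2 → ℝ))

private lemma Icc_succ_ins (l u : ℤ) (h : l ≤ u + 1) :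
    Finset.Icc l (u+1) = insert (u+1) (Finset.Icc l u) := by
  ext x; simp only [Finset.mem_Icc, Finset.mem_insert]; omega

private lemma sumsq (l : ℤ) : ∀ u : ℤ, l - 1 ≤ u →
    ∑ a ∈ Finset.Icc l u, (a:ℝ)^2
      = ((u:ℝ)*(u+1)*(2*u+1) - ((l:ℝ)-1)*l*(2*l-1))/6 := by
  refine Int.le_induction ?_ ?_
  · rw [Finset.Icc_eq_empty (by omega)]
    push_cast; simp; ring
  · intro u hu ih
    rw [Icc_succ_ins l u (by omega), Finset.sum_insert (by simp only [Finset.mem_Icc]; omega), ih]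
    push_cast; ring

private lemma cubicsum (c0 c1 c2 c3 : ℝ) : ∀ m : ℤ, 0 ≤ m →
    ∑ k ∈ Finset.Icc (1:ℤ) m, (c0 + c1*(k:ℝ) + c2*(k:ℝ)^2 + c3*(k:ℝ)^3)
      = c0*(m:ℝ) + c1*((m:ℝ)*(m+1)/2) + c2*((m:ℝ)*(m+1)*(2*m+1)/6)
        + c3*((m:ℝ)*(m+1)/2)^2 := by
  refine Int.le_induction ?_ ?_
  · rw [Finset.Icc_eq_empty (by omega)]; push_cast; simp
  · intro m hm ih
    rw [Icc_succ_ins 1 m (by omega), Finset.sum_insert (by simp only [Finset.mem_Icc]; omega), ih]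
    push_cast; ring

private lemma abs_split (f : ℤ → ℝ) : ∀ m : ℤ, 0 ≤ m →
    ∑ b ∈ Finset.Icc (-m) m, f |b| = f 0 + 2 * ∑ k ∈ Finset.Icc (1:ℤ) m, f k := by
  refine Int.le_induction ?_ ?_
  · rw [Finset.Icc_eq_empty (show ¬(1:ℤ) ≤ 0 by omega), neg_zero, Finset.Icc_self]
    simp
  · intro m hm ih
    have h1 : Finset.Icc (-(m+1)) (m+1) = insert (-(m+1)) (insert (m+1) (Finset.Icc (-m) m)) := by
      ext x; simp only [Finset.mem_Icc, Finset.mem_insert]; omega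
    rw [h1, Finset.sum_insert (by simp only [Finset.mem_insert, Finset.mem_Icc]; omega),
      Finset.sum_insert (by simp only [Finset.mem_Icc]; omega), ih,
      Icc_succ_ins 1 m (by omega), Finset.sum_insert (by simp only [Finset.mem_Icc]; omega),
      abs_neg, abs_of_nonneg (by omega : (0:ℤ) ≤ m + 1)]
    ring

private lemma combo_mem (a b c : Fin 2 → ℝ) (α β γ : ℝ) (hα : 0 ≤ α) (hβ : 0 ≤ β)
    (hγ : 0 ≤ γ) (hs : α + β + γ = 1) :
    α • a + β • b + γ • c ∈ convexHull ℝ ({a, b, c} : Set (Fin 2 → ℝ)) := by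
  have h := Finset.centerMass_mem_convexHull (Finset.univ : Finset (Fin 3))
    (w := ![α, β, γ]) (z := ![a, b, c]) (s := ({a, b, c} : Set (Fin 2 → ℝ))) ?_ ?_ ?_
  · have hc : Finset.centerMass Finset.univ ![α, β, γ] ![a, b, c] = α • a + β • b + γ • c := by
      rw [Finset.centerMass]
      simp [Fin.sum_univ_three, hs]
    rwa [hc] at h
  · intro i _; fin_cases i <;> simpa
  · simp [Fin.sum_univ_three, hs]
  · intro i _; fin_cases i <;> simp [Set.mem_insert_iff]

private lemma tri1_mem (y : Fin 2 → ℝ) :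
    y ∈ convexHull ℝ ({![1, 0], ![-3, -1], ![2, 0]} : Set (Fin 2 → ℝ)) ↔
      -1 ≤ y 1 ∧ y 1 ≤ 0 ∧ 1 + 4 * y 1 ≤ y 0 ∧ y 0 ≤ 2 + 5 * y 1 := by
  constructor
  · intro hy
    have hsub : ({![1, 0], ![-3, -1], ![2, 0]} : Set (Fin 2 → ℝ)) ⊆
        {y : Fin 2 → ℝ | -1 ≤ y 1 ∧ y 1 ≤ 0 ∧ 1 + 4 * y 1 ≤ y 0 ∧ y 0 ≤ 2 + 5 * y 1} := by
      rintro z (rfl | rfl | rfl) <;> norm_num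
    have hconv : Convex ℝ {y : Fin 2 → ℝ | -1 ≤ y 1 ∧ y 1 ≤ 0 ∧ 1 + 4 * y 1 ≤ y 0 ∧ y 0 ≤ 2 + 5 * y 1} := by
      intro x hx z hz s t hs ht hst
      simp only [Set.mem_setOf_eq, Pi.add_apply, Pi.smul_apply, smul_eq_mul] at *
      refine ⟨by nlinarith, by nlinarith, by nlinarith, by nlinarith⟩
    exact convexHull_min hsub hconv hy
  · rintro ⟨h1, h2, h3, h4⟩
    have key : y = (2 + 5 * y 1 - y 0) • ![1, 0] + (-(y 1)) • ![(-3 : ℝ), -1]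
        + (y 0 - 4 * y 1 - 1) • ![2, 0] := by
      funext i
      fin_cases i <;> simp <;> ring
    rw [key]
    exact combo_mem _ _ _ _ _ _ (by linarith) (by linarith) (by linarith) (by ring)

private lemma tri2_mem (y : Fin 2 → ℝ) :
    y ∈ convexHull ℝ ({![1, 0], ![2, 0], ![-3, 1]} : Set (Fin 2 → ℝ)) ↔
      0 ≤ y 1 ∧ y 1 ≤ 1 ∧ 1 - 4 * y 1 ≤ y 0 ∧ y 0 ≤ 2 - 5 * y 1 := by
  constructor
  · intro hy
    have hsub : ({![1, 0], ![2, 0], ![-3, 1]} : Set (Fin 2 → ℝ)) ⊆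
        {y : Fin 2 → ℝ | 0 ≤ y 1 ∧ y 1 ≤ 1 ∧ 1 - 4 * y 1 ≤ y 0 ∧ y 0 ≤ 2 - 5 * y 1} := by
      rintro z (rfl | rfl | rfl) <;> norm_num
    have hconv : Convex ℝ {y : Fin 2 → ℝ | 0 ≤ y 1 ∧ y 1 ≤ 1 ∧ 1 - 4 * y 1 ≤ y 0 ∧ y 0 ≤ 2 - 5 * y 1} := by
      intro x hx z hz s t hs ht hst
      simp only [Set.mem_setOf_eq, Pi.add_apply, Pi.smul_apply, smul_eq_mul] at *
      refine ⟨by nlinarith, by nlinarith, by nlinarith, by nlinarith⟩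
    exact convexHull_min hsub hconv hy
  · rintro ⟨h1, h2, h3, h4⟩
    have key : y = (2 - 5 * y 1 - y 0) • ![1, 0] + (y 0 + 4 * y 1 - 1) • ![(2 : ℝ), 0]
        + (y 1) • ![(-3 : ℝ), 1] := by
      funext i
      fin_cases i <;> simp <;> ring
    rw [key]
    exact combo_mem _ _ _ _ _ _ (by linarith) (by linarith) (by linarith) (by ring)

private lemma quad_mem (y : Fin 2 → ℝ) :
    y ∈ nonConvexQuad ↔ |y 1| ≤ 1 ∧ 1 - 4 * |y 1| ≤ y 0 ∧ y 0 ≤ 2 - 5 * |y 1| := by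
  rw [nonConvexQuad, Set.mem_union, tri1_mem, tri2_mem]
  rcases le_total (y 1) 0 with h | h
  · rw [abs_of_nonpos h]
    constructor
    · rintro (⟨a1, a2, a3, a4⟩ | ⟨a1, a2, a3, a4⟩) <;> exact ⟨by linarith, by linarith, by linarith⟩
    · rintro ⟨a1, a2, a3⟩; exact Or.inl ⟨by linarith, by linarith, by linarith, by linarith⟩
  · rw [abs_of_nonneg h]
    constructor
    · rintro (⟨a1, a2, a3, a4⟩ | ⟨a1, a2, a3, a4⟩) <;> exact ⟨by linarith, by linarith, by linarith⟩
    · rintro ⟨a1, a2, a3⟩; exact Or.inr ⟨by linarith, by linarith, by linarith, by linarith⟩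

private lemma scaled_mem (n : ℕ) (y : Fin 2 → ℝ) :
    y ∈ (n : ℝ) • nonConvexQuad ↔
      |y 1| ≤ n ∧ (n : ℝ) - 4 * |y 1| ≤ y 0 ∧ y 0 ≤ 2 * n - 5 * |y 1| := by
  rcases Nat.eq_zero_or_pos n with rfl | hn
  · have hne : nonConvexQuad.Nonempty :=
      ⟨![1, 0], Or.inl (subset_convexHull ℝ _ (by simp [Set.mem_insert_iff]))⟩
    rw [Nat.cast_zero, Set.zero_smul_set hne]
    constructor
    · rintro rfl
      norm_num
    · rintro ⟨h1, h2, h3⟩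
      have e1 : y 1 = 0 := by
        have := abs_nonneg (y 1); have : |y 1| = 0 := le_antisymm (by simpa using h1) (abs_nonneg _)
        exact abs_eq_zero.mp this
      have e0 : y 0 = 0 := by rw [e1] at h2 h3; simp at h2 h3; linarith
      have : y = 0 := by funext i; fin_cases i <;> simpa
      simpa
  · have hpos : (0 : ℝ) < n := by exact_mod_cast hn
    have hne : (n : ℝ) ≠ 0 := ne_of_gt hpos
    rw [Set.mem_smul_set_iff_inv_smul_mem₀ hne, quad_mem]
    have h1 : ((n : ℝ)⁻¹ • y) 1 = (n : ℝ)⁻¹ * y 1 := rfl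
    have h0 : ((n : ℝ)⁻¹ • y) 0 = (n : ℝ)⁻¹ * y 0 := rfl
    rw [h1, h0, abs_mul, abs_of_pos (inv_pos.mpr hpos)]
    have hinv : (n : ℝ) * (n : ℝ)⁻¹ = 1 := mul_inv_cancel₀ hne
    constructor
    · rintro ⟨a1, a2, a3⟩
      refine ⟨?_, ?_, ?_⟩ <;> nlinarith [abs_nonneg (y 1)]
    · rintro ⟨a1, a2, a3⟩
      refine ⟨?_, ?_, ?_⟩ <;> nlinarith [abs_nonneg (y 1), inv_pos.mpr hpos]

private def quadPts (n : ℕ) : Finset (Fin 2 → ℤ) :=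
  (Finset.Icc (-(n : ℤ)) n).biUnion fun b =>
    (Finset.Icc ((n : ℤ) - 4 * |b|) (2 * n - 5 * |b|)).image fun a => ![a, b]

private lemma mem_quadPts (n : ℕ) (x : Fin 2 → ℤ) :
    x ∈ quadPts n ↔ (fun i => ((x i : ℝ))) ∈ (n : ℝ) • nonConvexQuad := by
  rw [scaled_mem]
  simp only [quadPts, Finset.mem_biUnion, Finset.mem_image, Finset.mem_Icc]
  constructor
  · rintro ⟨b, hb, a, ha, rfl⟩
    simp only [Matrix.cons_val_zero, Matrix.cons_val_one, Matrix.head_cons]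
    rw [← Int.cast_abs]
    refine ⟨?_, ?_, ?_⟩
    · exact_mod_cast abs_le.mpr ⟨hb.1, hb.2⟩
    · exact_mod_cast ha.1
    · exact_mod_cast ha.2
  · rintro ⟨h1, h2, h3⟩
    rw [← Int.cast_abs] at h1 h2 h3
    have hb : |x 1| ≤ (n : ℤ) := by exact_mod_cast h1
    refine ⟨x 1, abs_le.mp hb, x 0, ⟨by exact_mod_cast h2, by exact_mod_cast h3⟩, ?_⟩
    funext i; fin_cases i <;> rfl

private lemma sum_quadPts (n : ℕ) :
    ∑ x ∈ quadPts n, ((x 0 : ℝ))^2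
      = ∑ b ∈ Finset.Icc (-(n:ℤ)) n,
          ∑ a ∈ Finset.Icc ((n:ℤ) - 4*|b|) (2*(n:ℤ) - 5*|b|), (a:ℝ)^2 := by
  rw [quadPts, Finset.sum_biUnion]
  · refine Finset.sum_congr rfl fun b _ => ?_
    rw [Finset.sum_image (by intro a _ a' _ h; simpa using congrFun h 0)]
    simp
  · intro b hb b' hb' hne
    simp only [Function.onFun]
    rw [Finset.disjoint_left]
    rintro x hx hx'
    simp only [Finset.mem_image] at hx hx'
    obtain ⟨a, _, rfl⟩ := hx
    obtain ⟨a', _, h⟩ := hx'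
    exact hne (by simpa using (congrFun h 1).symm)

private lemma quad_sum_value (n : ℕ) :
    ∑ x ∈ quadPts n, ((x 0 : ℝ))^2
      = (23*((n:ℝ)+3)*((n:ℝ)+2)*((n:ℝ)+1)*(n:ℝ) - 4*((n:ℝ)+2)*((n:ℝ)+1)*(n:ℝ)*((n:ℝ)-1)
          + 9*((n:ℝ)+1)*(n:ℝ)*((n:ℝ)-1)*((n:ℝ)-2))/24 := by
  rw [sum_quadPts]
  rw [abs_split (fun k => ∑ a ∈ Finset.Icc ((n:ℤ) - 4*k) (2*(n:ℤ) - 5*k), (a:ℝ)^2)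
    (n:ℤ) (by positivity)]
  have hz : (∑ a ∈ Finset.Icc ((n:ℤ) - 4*0) (2*(n:ℤ) - 5*0), (a:ℝ)^2)
      = ((2*(n:ℝ))*(2*(n:ℝ)+1)*(2*(2*(n:ℝ))+1) - ((n:ℝ)-1)*(n:ℝ)*(2*(n:ℝ)-1))/6 := by
    rw [sumsq _ _ (by omega)]
    push_cast
    ring
  have h2 : ∑ k ∈ Finset.Icc (1:ℤ) (n:ℤ),
        (∑ a ∈ Finset.Icc ((n:ℤ) - 4*k) (2*(n:ℤ) - 5*k), (a:ℝ)^2)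
      = ∑ k ∈ Finset.Icc (1:ℤ) (n:ℤ),
        (((7:ℝ)/3*(n:ℝ)^3 + 5/2*(n:ℝ)^2 + 1/6*(n:ℝ))
          + (-16*(n:ℝ)^2 - 14*(n:ℝ) - 1/6)*(k:ℝ)
          + (34*(n:ℝ) + 41/2)*(k:ℝ)^2 + (-61/3)*(k:ℝ)^3) := by
    refine Finset.sum_congr rfl fun k hk => ?_
    simp only [Finset.mem_Icc] at hk
    rw [sumsq _ _ (by omega)]
    push_cast
    ring
  rw [hz, h2, cubicsum _ _ _ _ (n:ℤ) (by positivity)]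
  push_cast
  ring

private lemma cast_choose_four (m : ℕ) :
    (((m+4).choose 4 : ℕ) : ℝ) = ((m:ℝ)+4)*((m:ℝ)+3)*((m:ℝ)+2)*((m:ℝ)+1)/24 := by
  rw [Nat.cast_choose ℝ (by omega : 4 ≤ m + 4)]
  have h4 : m + 4 - 4 = m := by omega
  rw [h4, show m+4 = m+3+1 from rfl, Nat.factorial_succ, show m+3 = m+2+1 from rfl,
    Nat.factorial_succ, show m+2 = m+1+1 from rfl, Nat.factorial_succ, Nat.factorial_succ]
  have hm : ((Nat.factorial m : ℕ) : ℝ) ≠ 0 := Nat.cast_ne_zero.mpr (Nat.factorial_ne_zero m)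
  have h24 : (Nat.factorial 4 : ℝ) = 24 := by norm_num [Nat.factorial]
  rw [h24]
  field_simp
  push_cast
  ring
/-- For the non-convex lattice quadrilateral `P` above and the weight
`w(x) = x₁²`, the polynomial `h*_{P,w}` defined by
`Σ_{n≥0} (Σ_{x∈nP∩ℤ²} x₁²) tⁿ = h*_{P,w}(t)/(1−t)⁵` equals `23t − 4t² + 9t³`; in particular it
has a negative coefficient, so nonnegativity fails for non-convex polygons. -/
theorem nonconvex_quadrilateral_negative_coefficient :
    (PowerSeries.mk fun n =>
        ∑ᶠ x ∈ {x : Fin 2 → ℤ | (fun i => ((x i : ℝ))) ∈ (n : ℝ) • nonConvexQuad},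
          ((x 0 : ℝ)) ^ 2)
        * (1 - PowerSeries.X) ^ 5
      = ((Polynomial.C (23 : ℝ) * Polynomial.X - Polynomial.C 4 * Polynomial.X ^ 2
          + Polynomial.C 9 * Polynomial.X ^ 3 : Polynomial ℝ) : PowerSeries ℝ) ∧
    (Polynomial.C (23 : ℝ) * Polynomial.X - Polynomial.C 4 * Polynomial.X ^ 2
        + Polynomial.C 9 * Polynomial.X ^ 3 : Polynomial ℝ).coeff 2 < 0 := by
  set q : Polynomial ℝ := Polynomial.C (23 : ℝ) * Polynomial.X - Polynomial.C 4 * Polynomial.X ^ 2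
      + Polynomial.C 9 * Polynomial.X ^ 3 with hq
  have hqcoeff : ∀ i : ℕ, q.coeff i
      = (if i = 1 then (23:ℝ) else 0) + (if i = 2 then (-4:ℝ) else 0)
        + (if i = 3 then (9:ℝ) else 0) := by
    intro i
    simp only [hq, Polynomial.coeff_add, Polynomial.coeff_sub, Polynomial.coeff_C_mul,
      Polynomial.coeff_X_pow, Polynomial.coeff_X]
    split_ifs <;> norm_num <;> omega
  constructor
  · have hE : ∀ n : ℕ,
        (∑ᶠ x ∈ {x : Fin 2 → ℤ | (fun i => ((x i : ℝ))) ∈ (n : ℝ) • nonConvexQuad},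
          ((x 0 : ℝ)) ^ 2)
        = (23*((n:ℝ)+3)*((n:ℝ)+2)*((n:ℝ)+1)*(n:ℝ) - 4*((n:ℝ)+2)*((n:ℝ)+1)*(n:ℝ)*((n:ℝ)-1)
            + 9*((n:ℝ)+1)*(n:ℝ)*((n:ℝ)-1)*((n:ℝ)-2))/24 := by
      intro n
      have hset : {x : Fin 2 → ℤ | (fun i => ((x i : ℝ))) ∈ (n : ℝ) • nonConvexQuad}
          = ↑(quadPts n) := by
        ext x
        simp only [Set.mem_setOf_eq, Finset.coe_sort_coe, Finset.mem_coe, mem_quadPts]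
      rw [hset, finsum_mem_coe_finset, quad_sum_value]
    have key : (PowerSeries.mk fun n =>
        ∑ᶠ x ∈ {x : Fin 2 → ℤ | (fun i => ((x i : ℝ))) ∈ (n : ℝ) • nonConvexQuad},
          ((x 0 : ℝ)) ^ 2)
        = (q : PowerSeries ℝ) * (PowerSeries.invOneSubPow ℝ 5).val := by
      ext n
      rw [PowerSeries.coeff_mk, hE n,
        PowerSeries.invOneSubPow_val_succ_eq_mk_add_choose ℝ 4,
        PowerSeries.coeff_mul]
      simp only [Polynomial.coeff_coe, PowerSeries.coeff_mk]
      rw [Finset.Nat.sum_antidiagonal_eq_sum_range_succ_mk]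
      have hterm : ∀ i ∈ Finset.range (n+1),
          q.coeff i * (((4 + (n - i)).choose 4 : ℕ) : ℝ)
          = (if i = 1 then (23:ℝ) * ((4 + (n - i)).choose 4 : ℕ) else 0)
            + (if i = 2 then (-4:ℝ) * ((4 + (n - i)).choose 4 : ℕ) else 0)
            + (if i = 3 then (9:ℝ) * ((4 + (n - i)).choose 4 : ℕ) else 0) := by
        intro i _
        rw [hqcoeff i]
        split_ifs <;> ring
      rw [Finset.sum_congr rfl hterm]
      rw [Finset.sum_add_distrib, Finset.sum_add_distrib,
        Finset.sum_ite_eq' (Finset.range (n+1)) 1,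
        Finset.sum_ite_eq' (Finset.range (n+1)) 2,
        Finset.sum_ite_eq' (Finset.range (n+1)) 3]
      simp only [Finset.mem_range]
      obtain _ | _ | _ | m := n
      · norm_num
      · norm_num
      · norm_num [Nat.choose]
      · have e1 : m + 3 - 1 = m + 2 := by omega
        have e2 : m + 3 - 2 = m + 1 := by omega
        have e3 : m + 3 - 3 = m := by omega
        rw [if_pos (by omega), if_pos (by omega), if_pos (by omega), e1, e2, e3,
          show 4 + (m+2) = (m+2)+4 by omega, show 4 + (m+1) = (m+1)+4 by omega,
          show 4 + m = m + 4 by omega,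
          cast_choose_four (m+2), cast_choose_four (m+1), cast_choose_four m]
        push_cast
        ring
    rw [key, mul_assoc, ← PowerSeries.invOneSubPow_inv_eq_one_sub_pow ℝ 5,
      (PowerSeries.invOneSubPow ℝ 5).val_inv, mul_one]
  · rw [hqcoeff 2]
    norm_num
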